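/- Suppose gamma_i = C i^{-alpha}(1 + epsilon_i) for constants C > 0 and alpha in (1/2, 1), where max_{|h| <= d} |epsilon_{i+h}| = O(1/i), and (gamma_i) is eventually positive and non-increasing. Then sum_i gamma_i^2 < infinity and there exists N such that for all i >= N, d * max_{|k-i| <= d} |gamma_k^2 - gamma_i^2| <= (1/2) gamma_i^3; consequently a uniformly bounded (with bound d) irreducible chain with these mean drifts is transient. -/

import Mathlib

open scoped ENNReal BigOperators
open Filter

/-- A discrete-time Markov chain on the nonnegative integers, given by its
row-stochastic transition matrix. -/
structure MarkovChain where
  p : ℕ → ℕ → ℝ≥0∞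
  row_sum : ∀ i, ∑' j, p i j = 1

namespace MarkovChain

/-- `n`-step transition probabilities. -/
noncomputable def step (M : MarkovChain) : ℕ → ℕ → ℕ → ℝ≥0∞
  | 0, i, j => if i = j then 1 else 0
  | (n+1), i, j => ∑' k, M.p i k * M.step n k j

/-- Irreducibility: every state reaches every other state with positive probability. -/
def Irreducible (M : MarkovChain) : Prop := ∀ i j, ∃ n, 0 < M.step n i j

/-- Probability, starting from `j`, that the chain reaches state `i` for the first
time at time `n` (time `0` counts iff `j = i`). -/
noncomputable def hitAt (M : MarkovChain) (i : ℕ) : ℕ → ℕ → ℝ≥0∞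
  | 0, j => if j = i then 1 else 0
  | (n+1), j => if j = i then 0 else ∑' k, M.p j k * M.hitAt i n k

/-- Probability that the first return to `i` occurs at time `n + 1`. -/
noncomputable def firstReturn (M : MarkovChain) (i n : ℕ) : ℝ≥0∞ :=
  ∑' k, M.p i k * M.hitAt i n k

/-- The chain is recurrent: return to each state is almost sure. -/
def Recurrent (M : MarkovChain) : Prop := ∀ i, ∑' n, M.firstReturn i n = 1

/-- The chain is positive recurrent: recurrent with finite expected return times. -/
def PositiveRecurrent (M : MarkovChain) : Prop :=
  M.Recurrent ∧ ∀ i, ∑' n : ℕ, ((n : ℝ≥0∞) + 1) * M.firstReturn i n < ⊤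

/-- Null recurrent: recurrent but not positive recurrent. -/
def NullRecurrent (M : MarkovChain) : Prop := M.Recurrent ∧ ¬ M.PositiveRecurrent

/-- The chain is transient: return to each state happens with probability `< 1`. -/
def Transient (M : MarkovChain) : Prop := ∀ i, ∑' n, M.firstReturn i n < 1

/-- Mean drift at state `i`. -/
noncomputable def drift (M : MarkovChain) (i : ℕ) : ℝ :=
  ∑' j, (M.p i j).toReal * ((j : ℝ) - i)

/-- The mean drift at `i` is finite (well-defined). -/
def DriftFinite (M : MarkovChain) (i : ℕ) : Prop :=
  Summable fun j => (M.p i j).toReal * ((j : ℝ) - i)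

/-- Second-moment drift at state `i`. -/
noncomputable def secondMoment (M : MarkovChain) (i : ℕ) : ℝ :=
  ∑' j, (M.p i j).toReal * ((j : ℝ) - i) ^ 2

/-- Downward uniformly bounded with bound `k`: no downward jumps longer than `k`. -/
def DownwardBounded (M : MarkovChain) (k : ℕ) : Prop :=
  ∀ i j, j + k < i → M.p i j = 0

/-- Uniformly bounded with bound `d`: no jumps longer than `d`. -/
def UniformlyBounded (M : MarkovChain) (d : ℕ) : Prop :=
  ∀ i j : ℕ, (d : ℤ) < |(i : ℤ) - j| → M.p i j = 0

end MarkovChain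

private lemma rpow_sq_eq (x t : ℝ) (hx : 0 ≤ x) : (x ^ t) ^ 2 = x ^ (2 * t) := by
  rw [mul_comm, Real.rpow_mul hx, ← Real.rpow_natCast (x ^ t) 2]
  norm_num

private lemma rpow_cube_eq (x t : ℝ) (hx : 0 ≤ x) : (x ^ t) ^ 3 = x ^ (3 * t) := by
  rw [mul_comm, Real.rpow_mul hx, ← Real.rpow_natCast (x ^ t) 3]
  norm_num

private lemma rpow_neg_diff_le {β m a b : ℝ} (hβ : 0 < β) (hm : 0 < m) (hma : m ≤ a)
    (hab : a ≤ b) : a ^ (-β) - b ^ (-β) ≤ β * m ^ (-β - 1) * (b - a) := by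
  rcases eq_or_lt_of_le hab with rfl | hab'
  · simp
  · have hapos : 0 < a := hm.trans_le hma
    have hcont : ContinuousOn (fun x : ℝ => x ^ (-β)) (Set.Icc a b) := by
      intro x hx
      have hx0 : x ≠ 0 := (hapos.trans_le hx.1).ne'
      exact (Real.continuousAt_rpow_const x (-β) (Or.inl hx0)).continuousWithinAt
    have hdiff : DifferentiableOn ℝ (fun x : ℝ => x ^ (-β)) (Set.Ioo a b) := by
      intro x hx
      have hx0 : x ≠ 0 := (hapos.trans hx.1).ne'
      exact (Real.hasDerivAt_rpow_const (Or.inl hx0)).differentiableAt.differentiableWithinAt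
    obtain ⟨ξ, hξ, hd⟩ := exists_deriv_eq_slope (fun x : ℝ => x ^ (-β)) hab' hcont hdiff
    have hξpos : 0 < ξ := hapos.trans hξ.1
    have hderiv : deriv (fun x : ℝ => x ^ (-β)) ξ = -β * ξ ^ (-β - 1) :=
      (Real.hasDerivAt_rpow_const (Or.inl hξpos.ne')).deriv
    rw [hderiv] at hd
    have hba : 0 < b - a := sub_pos.2 hab'
    have heq : b ^ (-β) - a ^ (-β) = -β * ξ ^ (-β - 1) * (b - a) :=
      (div_eq_iff hba.ne').1 hd.symm
    have hmons : ξ ^ (-β - 1) ≤ m ^ (-β - 1) :=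
      Real.rpow_le_rpow_of_nonpos hm (hma.trans hξ.1.le) (by linarith)
    have hξnn : 0 ≤ ξ ^ (-β - 1) := Real.rpow_nonneg hξpos.le _
    nlinarith [mul_nonneg (mul_nonneg (sub_nonneg.2 hmons) hba.le) hβ.le, heq]

private lemma rpow_neg_abs_diff {β m a b : ℝ} (hβ : 0 < β) (hm : 0 < m) (hma : m ≤ a)
    (hmb : m ≤ b) : |a ^ (-β) - b ^ (-β)| ≤ β * m ^ (-β - 1) * |a - b| := by
  rcases le_total a b with h | h
  · have h1 := rpow_neg_diff_le hβ hm hma h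
    have h2 : b ^ (-β) ≤ a ^ (-β) :=
      Real.rpow_le_rpow_of_nonpos (hm.trans_le hma) h (by linarith)
    rw [abs_of_nonneg (sub_nonneg.2 h2), abs_of_nonpos (sub_nonpos.2 h)]
    nlinarith
  · have h1 := rpow_neg_diff_le hβ hm hmb h
    have h2 : a ^ (-β) ≤ b ^ (-β) :=
      Real.rpow_le_rpow_of_nonpos (hm.trans_le hmb) h (by linarith)
    rw [abs_of_nonpos (sub_nonpos.2 h2), abs_of_nonneg (sub_nonneg.2 h)]
    nlinarith

namespace MarkovChain
variable (M : MarkovChain)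

variable (M : MarkovChain)

lemma p_le_one (x k : ℕ) : M.p x k ≤ 1 := (M.row_sum x) ▸ ENNReal.le_tsum k

lemma p_ne_top (x k : ℕ) : M.p x k ≠ ⊤ :=
  ((M.p_le_one x k).trans_lt ENNReal.one_lt_top).ne

noncomputable def hitProb (i x : ℕ) : ℝ≥0∞ := ∑' n, M.hitAt i n x

lemma partial_hit_le (i : ℕ) (G : ℕ → ℝ≥0∞) (hGi : 1 ≤ G i)
    (hsh : ∀ x, x ≠ i → (∑' k, M.p x k * G k) ≤ G x) :
    ∀ n x, ∑ m ∈ Finset.range (n+1), M.hitAt i m x ≤ G x := by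
  intro n
  induction n with
  | zero =>
    intro x
    by_cases hx : x = i
    · subst hx; simpa [hitAt] using hGi
    · simp [hitAt, hx]
  | succ n ih =>
    intro x
    rw [Finset.sum_range_succ']
    by_cases hx : x = i
    · subst hx
      have h1 : ∀ m, M.hitAt x (m+1) x = 0 := by intro m; simp [hitAt]
      simpa [hitAt, h1] using hGi
    · have h0 : M.hitAt i 0 x = 0 := by simp [hitAt, hx]
      have h1 : ∀ m, M.hitAt i (m+1) x = ∑' k, M.p x k * M.hitAt i m k := by
        intro m; simp [hitAt, hx]
      rw [h0, add_zero]
      calc ∑ m ∈ Finset.range (n+1), M.hitAt i (m+1) x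
          = ∑ m ∈ Finset.range (n+1), ∑' k, M.p x k * M.hitAt i m k := by
            exact Finset.sum_congr rfl fun m _ => h1 m
        _ = ∑' k, ∑ m ∈ Finset.range (n+1), M.p x k * M.hitAt i m k :=
            (Summable.tsum_finsetSum (fun m _ => ENNReal.summable)).symm
        _ = ∑' k, M.p x k * ∑ m ∈ Finset.range (n+1), M.hitAt i m k := by
            refine tsum_congr fun k => ?_
            rw [Finset.mul_sum]
        _ ≤ ∑' k, M.p x k * G k :=
            ENNReal.tsum_le_tsum fun k => mul_le_mul_right (ih k) _
        _ ≤ G x := hsh x hx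

lemma hitProb_le (i : ℕ) (G : ℕ → ℝ≥0∞) (hGi : 1 ≤ G i)
    (hsh : ∀ x, x ≠ i → (∑' k, M.p x k * G k) ≤ G x) (x : ℕ) :
    M.hitProb i x ≤ G x := by
  refine Summable.tsum_le_of_sum_range_le ENNReal.summable fun n => ?_
  cases n with
  | zero => simp
  | succ n => exact M.partial_hit_le i G hGi hsh n x

lemma hitProb_le_one (i x : ℕ) : M.hitProb i x ≤ 1 := by
  refine M.hitProb_le i (fun _ => 1) le_rfl (fun y _ => ?_) x
  simp [M.row_sum y]

lemma one_le_hitProb_self (i : ℕ) : 1 ≤ M.hitProb i i := by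
  have : M.hitAt i 0 i = 1 := by simp [hitAt]
  exact this ▸ ENNReal.le_tsum 0

lemma hitProb_eq (i x : ℕ) (hx : x ≠ i) :
    M.hitProb i x = ∑' k, M.p x k * M.hitProb i k := by
  unfold hitProb
  rw [tsum_eq_zero_add' ENNReal.summable]
  have h0 : M.hitAt i 0 x = 0 := by simp [hitAt, hx]
  have h1 : ∀ n, M.hitAt i (n+1) x = ∑' k, M.p x k * M.hitAt i n k := by
    intro n; simp [hitAt, hx]
  rw [h0, zero_add]
  calc (∑' n, M.hitAt i (n+1) x) = ∑' n, ∑' k, M.p x k * M.hitAt i n k :=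
        tsum_congr h1
    _ = ∑' k, ∑' n, M.p x k * M.hitAt i n k := ENNReal.tsum_comm
    _ = ∑' k, M.p x k * M.hitProb i k := tsum_congr fun k => ENNReal.tsum_mul_left

lemma hitProb_lt_one_step (i x k : ℕ) (hx : x ≠ i) (hk : 0 < M.p x k)
    (hk1 : M.hitProb i k < 1) : M.hitProb i x < 1 := by
  rw [M.hitProb_eq i x hx]
  have hle : ∀ j, M.p x j * M.hitProb i j ≤ M.p x j :=
    fun j => mul_le_of_le_one_right' (M.hitProb_le_one i j)
  have hne : (∑' j, M.p x j * M.hitProb i j) ≠ ⊤ := by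
    refine ne_top_of_le_ne_top ?_ (ENNReal.tsum_le_tsum hle)
    simp [M.row_sum x]
  calc (∑' j, M.p x j * M.hitProb i j) < ∑' j, M.p x j := by
        refine ENNReal.tsum_lt_tsum (i := k) hne hle ?_
        have := (ENNReal.mul_lt_mul_iff_right (a := M.p x k) hk.ne' (M.p_ne_top x k)).2 hk1
        simpa using this
    _ = 1 := M.row_sum x

lemma reach_propagate (i m : ℕ) (hm : M.hitProb i m < 1) :
    ∀ n x, 0 < M.step n x m →
      M.hitProb i x < 1 ∨ ∃ k, 0 < M.p i k ∧ M.hitProb i k < 1 := by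
  intro n
  induction n with
  | zero =>
    intro x hx
    by_cases h : x = m
    · exact Or.inl (h ▸ hm)
    · simp [step, h] at hx
  | succ n ih =>
    intro x hx
    have : ∃ k, M.p x k * M.step n k m ≠ 0 := by
      by_contra h
      push_neg at h
      rw [show M.step (n+1) x m = ∑' k, M.p x k * M.step n k m from rfl,
        ENNReal.tsum_eq_zero.2 h] at hx
      exact lt_irrefl 0 hx
    obtain ⟨k, hk⟩ := this
    rw [mul_ne_zero_iff] at hk
    have hpk : 0 < M.p x k := pos_iff_ne_zero.2 hk.1
    have hstep : 0 < M.step n k m := pos_iff_ne_zero.2 hk.2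
    rcases ih k hstep with h1 | h1
    · by_cases hxi : x = i
      · exact Or.inr ⟨k, hxi ▸ hpk, h1⟩
      · exact Or.inl (M.hitProb_lt_one_step i x k hxi hpk h1)
    · exact Or.inr h1

lemma return_lt_one (i : ℕ) (k₀ : ℕ) (hk : 0 < M.p i k₀)
    (hk1 : M.hitProb i k₀ < 1) : ∑' n, M.firstReturn i n < 1 := by
  have heq : (∑' n, M.firstReturn i n) = ∑' k, M.p i k * M.hitProb i k := by
    unfold firstReturn
    rw [ENNReal.tsum_comm]
    exact tsum_congr fun k => ENNReal.tsum_mul_left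
  rw [heq]
  have hle : ∀ j, M.p i j * M.hitProb i j ≤ M.p i j :=
    fun j => mul_le_of_le_one_right' (M.hitProb_le_one i j)
  have hne : (∑' j, M.p i j * M.hitProb i j) ≠ ⊤ := by
    refine ne_top_of_le_ne_top ?_ (ENNReal.tsum_le_tsum hle)
    simp [M.row_sum i]
  calc (∑' j, M.p i j * M.hitProb i j) < ∑' j, M.p i j := by
        refine ENNReal.tsum_lt_tsum (i := k₀) hne hle ?_
        have := (ENNReal.mul_lt_mul_iff_right (a := M.p i k₀) hk.ne' (M.p_ne_top i k₀)).2 hk1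
        simpa using this
    _ = 1 := M.row_sum i


end MarkovChain
namespace MarkovChain

lemma transient_of_criterion (M : MarkovChain) (d : ℕ) (hd : 0 < d)
    (γ : ℕ → ℝ) (hsum : Summable fun i => γ i ^ 2) (N₂ N₀ : ℕ)
    (hcrit : ∀ x : ℕ, N₂ ≤ x →
      (d : ℝ) * ((Finset.Icc (x - d) (x + d)).sup'
          (Finset.nonempty_Icc.mpr ((Nat.sub_le _ _).trans (Nat.le_add_right _ _))) fun k => |γ k ^ 2 - γ x ^ 2|)
        ≤ (1 / 2) * γ x ^ 3)
    (hpos : ∀ x, N₀ ≤ x → 0 < γ x)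
    (hirr : M.Irreducible) (hub : M.UniformlyBounded d)
    (hdrift : ∀ x, M.drift x = γ x) :
    ∀ i, (∑' n, M.firstReturn i n) < 1 := by
  intro i
  set f : ℕ → ℝ := fun x => ∑' j : ℕ, γ (j + (x + 1)) ^ 2 with hfdef
  have hfs : ∀ x : ℕ, Summable fun j : ℕ => γ (j + (x + 1)) ^ 2 := fun x =>
    (summable_nat_add_iff (f := fun i => γ i ^ 2) (x + 1)).2 hsum
  have hf0 : ∀ x, 0 ≤ f x := fun x => tsum_nonneg fun j => sq_nonneg _
  have hstep : ∀ x, f x = γ (x + 1) ^ 2 + f (x + 1) := by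
    intro x
    have h0 : f x = γ (0 + (x + 1)) ^ 2 + ∑' j : ℕ, γ ((j + 1) + (x + 1)) ^ 2 :=
      Summable.tsum_eq_zero_add (hfs x)
    rw [h0, zero_add]
    congr 1
    exact tsum_congr fun j => by rw [show j + 1 + (x + 1) = j + (x + 1 + 1) by omega]
  have hgap : ∀ x n : ℕ, f x = f (x + n) + ∑ t ∈ Finset.Ioc x (x + n), γ t ^ 2 := by
    intro x n
    induction n with
    | zero => simp
    | succ n ih =>
      rw [show x + (n + 1) = (x + n) + 1 from rfl,
        Finset.sum_Ioc_succ_top (by omega) (fun t => γ t ^ 2), ih, hstep (x + n)]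
      ring
  have hmono_f : ∀ x y : ℕ, x ≤ y → f y ≤ f x := by
    intro x y hxy
    obtain ⟨n, rfl⟩ := Nat.exists_eq_add_of_le hxy
    rw [hgap x n]
    have h0 : (0:ℝ) ≤ ∑ t ∈ Finset.Ioc x (x + n), γ t ^ 2 :=
      Finset.sum_nonneg fun t _ => sq_nonneg _
    linarith
  have hfpos : ∀ x, 0 < f x := by
    intro x
    have h1 : 0 < γ (max (x + 1) N₀) ^ 2 :=
      pow_pos (hpos _ (le_max_right _ _)) 2
    have h2 : γ (max (x + 1) N₀) ^ 2 ≤ f x := by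
      have h3 := Summable.le_tsum (hfs x) (max (x + 1) N₀ - (x + 1)) (fun j _ => sq_nonneg _)
      rwa [show max (x + 1) N₀ - (x + 1) + (x + 1) = max (x + 1) N₀ by omega] at h3
    linarith
  set N' : ℕ := N₂ + N₀ + i + d + 1 with hN'
  have hN'i : i < N' := by omega
  set c : ℝ := f (N' - 1) with hc
  have hcpos : 0 < c := hfpos _
  -- the transition window
  have hwin : ∀ x : ℕ, N' ≤ x → ∀ j : ℕ, j ∉ Finset.Icc (x - d) (x + d) → M.p x j = 0 := by
    intro x hx j hj
    rw [Finset.mem_Icc] at hj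
    push_neg at hj
    apply hub
    have hxd : d ≤ x := by omega
    rcases lt_or_ge j (x - d) with h | h
    · have h' : (d : ℤ) < (x : ℤ) - j := by omega
      exact h'.trans_le (le_abs_self _)
    · have hj2 := hj h
      have h' : (d : ℤ) < -((x : ℤ) - j) := by omega
      exact h'.trans_le (neg_le_abs _)
  have hqsum : ∀ x : ℕ, N' ≤ x →
      ∑ k ∈ Finset.Icc (x - d) (x + d), (M.p x k).toReal = 1 := by
    intro x hx
    have h1 : (∑ k ∈ Finset.Icc (x - d) (x + d), M.p x k) = 1 := by
      rw [← tsum_eq_sum (L := SummationFilter.unconditional ℕ) (hwin x hx), M.row_sum x]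
    calc ∑ k ∈ Finset.Icc (x - d) (x + d), (M.p x k).toReal
        = (∑ k ∈ Finset.Icc (x - d) (x + d), M.p x k).toReal :=
          (ENNReal.toReal_sum fun k _ => M.p_ne_top x k).symm
      _ = 1 := by rw [h1]; simp
  have hqdrift : ∀ x : ℕ, N' ≤ x →
      ∑ k ∈ Finset.Icc (x - d) (x + d), (M.p x k).toReal * ((k : ℝ) - x) = γ x := by
    intro x hx
    rw [← hdrift x]
    unfold MarkovChain.drift
    exact (tsum_eq_sum fun j hj => by rw [hwin x hx j hj]; simp).symm
  -- key estimate
  have hΔmem : ∀ x : ℕ, ∀ k ∈ Finset.Icc (x - d) (x + d),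
      |γ k ^ 2 - γ x ^ 2| ≤ (Finset.Icc (x - d) (x + d)).sup'
        (Finset.nonempty_Icc.mpr ((Nat.sub_le _ _).trans (Nat.le_add_right _ _))) fun k => |γ k ^ 2 - γ x ^ 2| :=
    fun x k hk => Finset.le_sup' (fun j => |γ j ^ 2 - γ x ^ 2|) hk
  have hΔ0 : ∀ x : ℕ, (0:ℝ) ≤ (Finset.Icc (x - d) (x + d)).sup'
      (Finset.nonempty_Icc.mpr ((Nat.sub_le _ _).trans (Nat.le_add_right _ _))) fun k => |γ k ^ 2 - γ x ^ 2| := by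
    intro x
    have hx : x ∈ Finset.Icc (x - d) (x + d) := Finset.mem_Icc.mpr ⟨by omega, by omega⟩
    have h1 := hΔmem x x hx
    simpa using h1
  have hkey : ∀ x : ℕ, N' ≤ x → ∀ k ∈ Finset.Icc (x - d) (x + d),
      f k ≤ f x - ((k : ℝ) - x) * γ x ^ 2
        + d * ((Finset.Icc (x - d) (x + d)).sup'
            (Finset.nonempty_Icc.mpr ((Nat.sub_le _ _).trans (Nat.le_add_right _ _))) fun k => |γ k ^ 2 - γ x ^ 2|) := by
    intro x hx k hk
    set Δ := (Finset.Icc (x - d) (x + d)).sup'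
      (Finset.nonempty_Icc.mpr ((Nat.sub_le _ _).trans (Nat.le_add_right _ _))) fun k => |γ k ^ 2 - γ x ^ 2| with hΔdef
    have hkmem := Finset.mem_Icc.1 hk
    rcases le_or_gt x k with hxk | hxk
    · obtain ⟨n, rfl⟩ := Nat.exists_eq_add_of_le hxk
      have hnd : n ≤ d := by omega
      have hlow : ∀ t ∈ Finset.Ioc x (x + n), γ x ^ 2 - Δ ≤ γ t ^ 2 := by
        intro t ht
        rw [Finset.mem_Ioc] at ht
        have htm : t ∈ Finset.Icc (x - d) (x + d) := Finset.mem_Icc.mpr ⟨by omega, by omega⟩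
        have h1 := hΔmem x t htm
        rw [← hΔdef] at h1
        have h2 := abs_le.1 h1
        linarith [h2.1]
      have hsl : (n : ℝ) * (γ x ^ 2 - Δ) ≤ ∑ t ∈ Finset.Ioc x (x + n), γ t ^ 2 := by
        calc (n : ℝ) * (γ x ^ 2 - Δ)
            = ∑ _t ∈ Finset.Ioc x (x + n), (γ x ^ 2 - Δ) := by
              rw [Finset.sum_const, Nat.card_Ioc, nsmul_eq_mul]
              congr 1
              push_cast [show x + n - x = n by omega]
              ring
          _ ≤ _ := Finset.sum_le_sum hlow
      have hg := hgap x n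
      have hcast : ((x + n : ℕ) : ℝ) - x = (n : ℝ) := by push_cast; ring
      rw [hcast]
      have hnd' : (n : ℝ) ≤ d := by exact_mod_cast hnd
      nlinarith [hΔ0 x, hg, hsl]
    · have hkx : k ≤ x := hxk.le
      obtain ⟨n, rfl⟩ := Nat.exists_eq_add_of_le hkx
      have hn1 : 1 ≤ n := by omega
      have hnd : n ≤ d := by omega
      have hhigh : ∀ t ∈ Finset.Ioc k (k + n), γ t ^ 2 ≤ γ (k + n) ^ 2 + Δ := by
        intro t ht
        rw [Finset.mem_Ioc] at ht
        have htm : t ∈ Finset.Icc (k + n - d) (k + n + d) :=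
          Finset.mem_Icc.mpr ⟨by omega, by omega⟩
        have h1 := hΔmem (k + n) t htm
        rw [← hΔdef] at h1
        have h2 := abs_le.1 h1
        linarith [h2.2]
      have hsl : ∑ t ∈ Finset.Ioc k (k + n), γ t ^ 2 ≤ (n : ℝ) * (γ (k + n) ^ 2 + Δ) := by
        calc ∑ t ∈ Finset.Ioc k (k + n), γ t ^ 2
            ≤ ∑ _t ∈ Finset.Ioc k (k + n), (γ (k + n) ^ 2 + Δ) := Finset.sum_le_sum hhigh
          _ = (n : ℝ) * (γ (k + n) ^ 2 + Δ) := by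
              rw [Finset.sum_const, Nat.card_Ioc, nsmul_eq_mul]
              congr 1
              push_cast [show k + n - k = n by omega]
              ring
      have hg := hgap k n
      have hcast : ((k : ℕ) : ℝ) - ((k + n : ℕ) : ℝ) = -(n : ℝ) := by push_cast; ring
      have hnd' : (n : ℝ) ≤ d := by exact_mod_cast hnd
      have hΔ0' := hΔ0 (k + n)
      rw [← hΔdef] at hΔ0'
      nlinarith [hg, hsl]
  -- real superharmonicity
  have hshR : ∀ x : ℕ, N' ≤ x →
      ∑ k ∈ Finset.Icc (x - d) (x + d), (M.p x k).toReal * f k ≤ f x := by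
    intro x hx
    have hγx : 0 < γ x := hpos x (by omega)
    have hcx := hcrit x (by omega)
    set Δ := (Finset.Icc (x - d) (x + d)).sup'
      (Finset.nonempty_Icc.mpr ((Nat.sub_le _ _).trans (Nat.le_add_right _ _))) fun k => |γ k ^ 2 - γ x ^ 2| with hΔdef
    have hstep1 : ∑ k ∈ Finset.Icc (x - d) (x + d), (M.p x k).toReal * f k
        ≤ ∑ k ∈ Finset.Icc (x - d) (x + d),
            ((M.p x k).toReal * f x
              - (M.p x k).toReal * (((k : ℝ) - x) * γ x ^ 2)
              + (M.p x k).toReal * ((d : ℝ) * Δ)) := by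
      refine Finset.sum_le_sum fun k hk => ?_
      have h1 := hkey x hx k hk
      rw [← hΔdef] at h1
      have h2 : (0:ℝ) ≤ (M.p x k).toReal := ENNReal.toReal_nonneg
      calc (M.p x k).toReal * f k
          ≤ (M.p x k).toReal * (f x - ((k : ℝ) - x) * γ x ^ 2 + d * Δ) :=
            mul_le_mul_of_nonneg_left h1 h2
        _ = _ := by ring
    have e1 : ∑ k ∈ Finset.Icc (x - d) (x + d), (M.p x k).toReal * f x = f x := by
      rw [← Finset.sum_mul, hqsum x hx, one_mul]
    have e2 : ∑ k ∈ Finset.Icc (x - d) (x + d),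
        (M.p x k).toReal * (((k : ℝ) - x) * γ x ^ 2) = γ x ^ 3 := by
      have h3 : ∑ k ∈ Finset.Icc (x - d) (x + d),
          (M.p x k).toReal * (((k : ℝ) - x) * γ x ^ 2)
          = (∑ k ∈ Finset.Icc (x - d) (x + d), (M.p x k).toReal * ((k : ℝ) - x)) * γ x ^ 2 := by
        rw [Finset.sum_mul]
        exact Finset.sum_congr rfl fun k _ => by ring
      rw [h3, hqdrift x hx]; ring
    have e3 : ∑ k ∈ Finset.Icc (x - d) (x + d),
        (M.p x k).toReal * ((d : ℝ) * Δ) = (d : ℝ) * Δ := by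
      rw [← Finset.sum_mul, hqsum x hx, one_mul]
    rw [Finset.sum_add_distrib, Finset.sum_sub_distrib, e1, e2, e3] at hstep1
    have hγ3 : 0 < γ x ^ 3 := pow_pos hγx 3
    linarith
  -- the ENNReal Lyapunov function
  set g : ℕ → ℝ := fun x => if x < N' then 1 else f x / c with hgdef
  set G : ℕ → ℝ≥0∞ := fun x => ENNReal.ofReal (g x) with hGdef
  have hg1 : ∀ x, g x ≤ 1 := by
    intro x
    rw [hgdef]
    dsimp only
    split
    · exact le_rfl
    · next h =>
      exact (div_le_one hcpos).2 (hmono_f (N' - 1) x (by omega))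
  have hgnn : ∀ x, 0 ≤ g x := by
    intro x
    rw [hgdef]
    dsimp only
    split
    · exact zero_le_one
    · exact div_nonneg (hf0 x) hcpos.le
  have hgfc : ∀ x, g x ≤ f x / c := by
    intro x
    rw [hgdef]
    dsimp only
    split
    · next h =>
      exact (one_le_div hcpos).2 (hmono_f x (N' - 1) (by omega))
    · exact le_rfl
  have hGi : 1 ≤ G i := by
    rw [hGdef]
    dsimp only
    rw [hgdef]
    dsimp only
    rw [if_pos hN'i]
    simp
  have hsh : ∀ x, x ≠ i → (∑' k, M.p x k * G k) ≤ G x := by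
    intro x _
    rcases lt_or_ge x N' with hx | hx
    · have hGx : G x = 1 := by
        rw [hGdef]; dsimp only; rw [hgdef]; dsimp only; rw [if_pos hx]; simp
      rw [hGx]
      calc (∑' k, M.p x k * G k) ≤ ∑' k, M.p x k * 1 := by
            refine ENNReal.tsum_le_tsum fun k => mul_le_mul_right ?_ _
            rw [hGdef]
            exact ENNReal.ofReal_le_one.2 (hg1 k)
        _ = 1 := by simpa using M.row_sum x
    · have h1 : (∑' k, M.p x k * G k)
          = ∑ k ∈ Finset.Icc (x - d) (x + d), M.p x k * G k :=
        tsum_eq_sum fun j hj => by rw [hwin x hx j hj, zero_mul]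
      have h2 : ∀ k, M.p x k * G k = ENNReal.ofReal ((M.p x k).toReal * g k) := by
        intro k
        rw [hGdef, ENNReal.ofReal_mul ENNReal.toReal_nonneg,
          ENNReal.ofReal_toReal (M.p_ne_top x k)]
      have hgx : g x = f x / c := by
        rw [hgdef]; dsimp only; rw [if_neg (not_lt.2 hx)]
      calc (∑' k, M.p x k * G k)
          = ∑ k ∈ Finset.Icc (x - d) (x + d), ENNReal.ofReal ((M.p x k).toReal * g k) := by
            rw [h1]; exact Finset.sum_congr rfl fun k _ => h2 k
        _ = ENNReal.ofReal (∑ k ∈ Finset.Icc (x - d) (x + d), (M.p x k).toReal * g k) :=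
            (ENNReal.ofReal_sum_of_nonneg fun k _ =>
              mul_nonneg ENNReal.toReal_nonneg (hgnn k)).symm
        _ ≤ ENNReal.ofReal (g x) := by
            apply ENNReal.ofReal_le_ofReal
            have hb : ∑ k ∈ Finset.Icc (x - d) (x + d), (M.p x k).toReal * g k
                ≤ ∑ k ∈ Finset.Icc (x - d) (x + d), (M.p x k).toReal * (f k / c) :=
              Finset.sum_le_sum fun k _ =>
                mul_le_mul_of_nonneg_left (hgfc k) ENNReal.toReal_nonneg
            have hb2 : ∑ k ∈ Finset.Icc (x - d) (x + d), (M.p x k).toReal * (f k / c)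
                = (∑ k ∈ Finset.Icc (x - d) (x + d), (M.p x k).toReal * f k) / c := by
              rw [Finset.sum_div]
              exact Finset.sum_congr rfl fun k _ => by ring
            have hb3 : (∑ k ∈ Finset.Icc (x - d) (x + d), (M.p x k).toReal * f k) / c
                ≤ f x / c := by
              gcongr
              exact hshR x hx
            rw [hgx]
            linarith
        _ = G x := by rw [hGdef]
  have hm : M.hitProb i N' < 1 := by
    have hle := M.hitProb_le i G hGi hsh N'
    have hfN : f N' < c := by
      have hs := hstep (N' - 1)
      rw [show N' - 1 + 1 = N' by omega] at hs
      rw [← hc] at hs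
      have hγN : 0 < γ N' := hpos N' (by omega)
      nlinarith [pow_pos hγN 2]
    have hGN : G N' < 1 := by
      rw [hGdef]
      dsimp only
      rw [hgdef]
      dsimp only
      rw [if_neg (by omega : ¬ N' < N')]
      exact ENNReal.ofReal_lt_one.2 ((div_lt_one hcpos).2 hfN)
    exact hle.trans_lt hGN
  obtain ⟨n, hn⟩ := hirr i N'
  rcases M.reach_propagate i N' hm n i hn with h | ⟨k₀, hk₀, hk₀1⟩
  · exact absurd h (not_lt.2 (M.one_le_hitProb_self i))
  · exact M.return_lt_one i k₀ hk₀ hk₀1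

end MarkovChain


set_option maxHeartbeats 1600000 in
/-- drifts of the form `γ_i = C i^{-α} (1 + ε_i)` with
`1/2 < α < 1` and locally `O(1/i)` perturbations satisfy the transience
criterion, so the corresponding uniformly bounded chains are transient. -/
theorem stmt10 (d : ℕ) (hd : 0 < d) (γ ε : ℕ → ℝ) (C α : ℝ)
    (hC : 0 < C) (hα₁ : 1 / 2 < α) (hα₂ : α < 1)
    (hγ : ∀ i : ℕ, 1 ≤ i → γ i = C * (i : ℝ) ^ (-α) * (1 + ε i))
    (hε : ∃ K : ℝ, ∃ i₁ : ℕ, ∀ i : ℕ, i₁ ≤ i →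
      ((Finset.Icc (i - d) (i + d)).sup'
          (Finset.nonempty_Icc.mpr (by omega)) fun k => |ε k|)
        ≤ K / i)
    (N₀ : ℕ) (hpos : ∀ i, N₀ ≤ i → 0 < γ i)
    (hmono : ∀ i j, N₀ ≤ i → i ≤ j → γ j ≤ γ i) :
    (Summable fun i => γ i ^ 2) ∧
    (∃ N : ℕ, ∀ i, N ≤ i →
      (d : ℝ) * ((Finset.Icc (i - d) (i + d)).sup'
          (Finset.nonempty_Icc.mpr (by omega))
          fun k => |γ k ^ 2 - γ i ^ 2|)
        ≤ (1 / 2) * γ i ^ 3) ∧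
    (∀ M : MarkovChain, M.Irreducible → M.UniformlyBounded d →
      (∀ i, M.DriftFinite i) → (∀ i, M.drift i = γ i) → M.Transient) := by
  classical
  obtain ⟨K₀, i₁, hK₀⟩ := hε
  set K : ℝ := max K₀ 1 with hKdef
  have hK1 : (1:ℝ) ≤ K := le_max_right _ _
  have hKpos : (0:ℝ) < K := lt_of_lt_of_le one_pos hK1
  set N₁ : ℕ := i₁ + 2 * d + 2 + ⌈2 * K⌉₊ with hN₁
  have hbase : ∀ i : ℕ, N₁ ≤ i →
      (1:ℝ) ≤ (i:ℝ) ∧ 2 * K ≤ (i:ℝ) ∧ 2 * d + 2 ≤ i ∧ i₁ ≤ i := by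
    intro i hi
    refine ⟨?_, ?_, by omega, by omega⟩
    · exact_mod_cast (by omega : 1 ≤ i)
    · calc 2 * K ≤ (⌈2 * K⌉₊ : ℝ) := Nat.le_ceil _
        _ ≤ (i : ℝ) := by exact_mod_cast (by omega : ⌈2 * K⌉₊ ≤ i)
  have hεb : ∀ i : ℕ, N₁ ≤ i → ∀ k ∈ Finset.Icc (i - d) (i + d), |ε k| ≤ K / i := by
    intro i hi k hk
    obtain ⟨h1, h2, h3, h4⟩ := hbase i hi
    have hip : (0:ℝ) < i := by linarith
    calc |ε k| ≤ _ := Finset.le_sup' (fun j => |ε j|) hk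
      _ ≤ K₀ / i := hK₀ i h4
      _ ≤ K / i := by gcongr; exact le_max_left _ _
  have hKhalf : ∀ i : ℕ, N₁ ≤ i → K / i ≤ 1 / 2 := by
    intro i hi
    obtain ⟨h1, h2, _, _⟩ := hbase i hi
    rw [div_le_div_iff₀ (by linarith) (by norm_num)]
    linarith
  -- Part 1 : summability
  have hγsqle : ∀ m : ℕ, N₁ ≤ m → γ m ^ 2 ≤ 4 * C ^ 2 * (m:ℝ) ^ (-(2*α)) := by
    intro m hm
    obtain ⟨h1, h2, h3, h4⟩ := hbase m hm
    have hmm : m ∈ Finset.Icc (m - d) (m + d) := Finset.mem_Icc.mpr ⟨by omega, by omega⟩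
    have hεm := abs_le.1 ((hεb m hm m hmm).trans (hKhalf m hm))
    have hm1 : 1 ≤ m := by omega
    have heq : γ m ^ 2 = C ^ 2 * ((m:ℝ) ^ (-α)) ^ 2 * (1 + ε m) ^ 2 := by
      rw [hγ m hm1]; ring
    rw [heq, rpow_sq_eq (m:ℝ) (-α) (by positivity),
      show (2:ℝ) * -α = -(2*α) by ring]
    have hnn : (0:ℝ) ≤ (m:ℝ) ^ (-(2*α)) := Real.rpow_nonneg (by positivity) _
    have hu : (1 + ε m) ^ 2 ≤ 4 := by nlinarith [hεm.1, hεm.2]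
    nlinarith [mul_nonneg (sq_nonneg C) hnn, hu]
  have part1 : Summable fun i : ℕ => γ i ^ 2 := by
    have hs1 : Summable (fun n : ℕ => 4 * C ^ 2 * (n:ℝ) ^ (-(2*α))) :=
      (Real.summable_nat_rpow.2 (by linarith)).mul_left _
    refine (summable_nat_add_iff (f := fun i => γ i ^ 2) N₁).1 ?_
    exact Summable.of_nonneg_of_le (fun n => sq_nonneg _)
      (fun n => hγsqle (n + N₁) (by omega))
      ((summable_nat_add_iff (f := fun n : ℕ => 4 * C ^ 2 * (n:ℝ) ^ (-(2*α))) N₁).2 hs1)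
  -- Part 2 : the criterion
  set B : ℝ := C ^ 2 * (64 * (d:ℝ) + 6 * K) with hBdef
  have hB : 0 < B := by
    have : (1:ℝ) ≤ (d:ℝ) := by exact_mod_cast hd
    rw [hBdef]; positivity
  have hest : ∀ i : ℕ, N₁ ≤ i → ∀ k ∈ Finset.Icc (i - d) (i + d),
      |γ k ^ 2 - γ i ^ 2| ≤ B * (i:ℝ) ^ (-(2*α) - 1) := by
    intro i hi k hk
    obtain ⟨h1, h2, h3, h4⟩ := hbase i hi
    have hip : (0:ℝ) < i := by linarith
    have hkIcc := Finset.mem_Icc.1 hk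
    have hk1n : i ≤ k + d := by omega
    have hc1 : (i:ℝ) ≤ (k:ℝ) + d := by exact_mod_cast hk1n
    have hc2 : (k:ℝ) ≤ (i:ℝ) + d := by exact_mod_cast hkIcc.2
    have habs : |(k:ℝ) - i| ≤ d := abs_le.2 ⟨by linarith, by linarith⟩
    have h2d : 2 * (d:ℝ) ≤ i := by exact_mod_cast (by omega : 2 * d ≤ i)
    have hhalfk : (i:ℝ)/2 ≤ k := by linarith
    have hhalfi : (i:ℝ)/2 ≤ i := by linarith
    have hk01 : 1 ≤ k := by omega
    have hεk := hεb i hi k hk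
    have hεi := hεb i hi i (Finset.mem_Icc.mpr ⟨by omega, by omega⟩)
    have hhalf : K / i ≤ 1/2 := hKhalf i hi
    have hεk' := abs_le.1 (hεk.trans hhalf)
    have hεi' := abs_le.1 (hεi.trans hhalf)
    have hX0 : (0:ℝ) ≤ (i:ℝ) ^ (-(2*α) - 1) := Real.rpow_nonneg hip.le _
    have hβ2 : (0:ℝ) < 2*α := by linarith
    -- bound on |k^(-2α) - i^(-2α)|
    have hAA' : |(k:ℝ) ^ (-(2*α)) - (i:ℝ) ^ (-(2*α))|
        ≤ (2*α) * ((i:ℝ)/2) ^ (-(2*α) - 1) * |(k:ℝ) - i| :=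
      rpow_neg_abs_diff hβ2 (by linarith) hhalfk hhalfi
    have hpow2 : ((i:ℝ)/2) ^ (-(2*α) - 1) ≤ 8 * (i:ℝ) ^ (-(2*α) - 1) := by
      have h2t : ((2:ℝ)) ^ (-(2*α) - 1) = ((2:ℝ) ^ (2*α + 1))⁻¹ := by
        rw [show -(2*α) - 1 = -(2*α+1) by ring, Real.rpow_neg (by norm_num)]
      have h2b : (2:ℝ) ^ (2*α + 1) ≤ 8 := by
        calc (2:ℝ) ^ (2*α+1) ≤ (2:ℝ) ^ (3:ℝ) :=
              Real.rpow_le_rpow_of_exponent_le (by norm_num) (by linarith)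
          _ = 8 := by
              rw [show (3:ℝ) = ((3:ℕ):ℝ) by norm_num, Real.rpow_natCast]; norm_num
      have h2c : (1:ℝ) ≤ (2:ℝ) ^ (2*α + 1) := by
        calc (1:ℝ) = (2:ℝ) ^ (0:ℝ) := (Real.rpow_zero 2).symm
          _ ≤ (2:ℝ) ^ (2*α+1) :=
              Real.rpow_le_rpow_of_exponent_le (by norm_num) (by linarith)
      calc ((i:ℝ)/2) ^ (-(2*α) - 1)
          = (i:ℝ) ^ (-(2*α) - 1) / (2:ℝ) ^ (-(2*α) - 1) :=
            Real.div_rpow hip.le (by norm_num) _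
        _ = (i:ℝ) ^ (-(2*α) - 1) * (2:ℝ) ^ (2*α + 1) := by
            rw [h2t, div_eq_mul_inv, inv_inv]
        _ ≤ 8 * (i:ℝ) ^ (-(2*α) - 1) := by nlinarith [hX0, h2b]
    have hA1 : |(k:ℝ) ^ (-(2*α)) - (i:ℝ) ^ (-(2*α))|
        ≤ 16 * (d:ℝ) * ((i:ℝ) ^ (-(2*α) - 1)) := by
      have hmid0 : (0:ℝ) ≤ ((i:ℝ)/2) ^ (-(2*α) - 1) := Real.rpow_nonneg (by linarith) _
      have t1 : (2*α) * (((i:ℝ)/2) ^ (-(2*α) - 1)) ≤ 2 * (8 * (i:ℝ) ^ (-(2*α) - 1)) :=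
        mul_le_mul (by linarith) hpow2 hmid0 (by norm_num)
      have t2 : (2*α) * (((i:ℝ)/2) ^ (-(2*α) - 1)) * |(k:ℝ) - i|
          ≤ (2 * (8 * (i:ℝ) ^ (-(2*α) - 1))) * d :=
        mul_le_mul t1 habs (abs_nonneg _) (by positivity)
      calc |(k:ℝ) ^ (-(2*α)) - (i:ℝ) ^ (-(2*α))|
          ≤ (2*α) * (((i:ℝ)/2) ^ (-(2*α) - 1)) * |(k:ℝ) - i| := hAA'
        _ ≤ (2 * (8 * (i:ℝ) ^ (-(2*α) - 1))) * d := t2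
        _ = 16 * (d:ℝ) * ((i:ℝ) ^ (-(2*α) - 1)) := by ring
    have hu4 : (1 + ε k) ^ 2 ≤ 4 := by nlinarith [hεk'.1, hεk'.2]
    have hu0 : (0:ℝ) ≤ (1 + ε k) ^ 2 := sq_nonneg _
    have huu : |(1 + ε k) ^ 2 - (1 + ε i) ^ 2| ≤ 6 * (K / i) := by
      rw [show (1+ε k)^2 - (1+ε i)^2 = (ε k - ε i) * (2 + ε k + ε i) by ring, abs_mul]
      have b1 : |ε k - ε i| ≤ 2 * (K/i) := by
        have : |ε k - ε i| ≤ |ε k| + |ε i| := by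
          rw [sub_eq_add_neg]
          exact (abs_add_le _ _).trans (by rw [abs_neg])
        linarith
      have b2 : |2 + ε k + ε i| ≤ 3 := by
        rw [abs_le]
        constructor <;> nlinarith [hεk'.1, hεk'.2, hεi'.1, hεi'.2]
      have hKi0 : (0:ℝ) ≤ K / i := by positivity
      calc |ε k - ε i| * |2 + ε k + ε i| ≤ (2*(K/i)) * 3 :=
            mul_le_mul b1 b2 (abs_nonneg _) (by linarith)
        _ = 6 * (K/i) := by ring
    have hA'0 : (0:ℝ) ≤ (i:ℝ) ^ (-(2*α)) := Real.rpow_nonneg hip.le _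
    have hAx : (i:ℝ) ^ (-(2*α)) * (K / i) = K * ((i:ℝ) ^ (-(2*α) - 1)) := by
      have hsub : (i:ℝ) ^ (-(2*α) - 1) = (i:ℝ) ^ (-(2*α)) / (i:ℝ) ^ (1:ℝ) :=
        Real.rpow_sub hip _ _
      rw [hsub, Real.rpow_one]
      field_simp
    have hγk2 : γ k ^ 2 = C ^ 2 * ((k:ℝ) ^ (-(2*α))) * (1 + ε k) ^ 2 := by
      have h' : γ k ^ 2 = C ^ 2 * (((k:ℝ) ^ (-α)) ^ 2) * (1 + ε k) ^ 2 := by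
        rw [hγ k hk01]; ring
      rw [h', rpow_sq_eq (k:ℝ) (-α) (by positivity), show (2:ℝ) * -α = -(2*α) by ring]
    have hγi2 : γ i ^ 2 = C ^ 2 * ((i:ℝ) ^ (-(2*α))) * (1 + ε i) ^ 2 := by
      have h' : γ i ^ 2 = C ^ 2 * (((i:ℝ) ^ (-α)) ^ 2) * (1 + ε i) ^ 2 := by
        rw [hγ i (by omega)]; ring
      rw [h', rpow_sq_eq (i:ℝ) (-α) (by positivity), show (2:ℝ) * -α = -(2*α) by ring]
    calc |γ k ^ 2 - γ i ^ 2|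
        = C ^ 2 * |((k:ℝ) ^ (-(2*α)) - (i:ℝ) ^ (-(2*α))) * (1 + ε k) ^ 2
            + (i:ℝ) ^ (-(2*α)) * ((1 + ε k) ^ 2 - (1 + ε i) ^ 2)| := by
          rw [show γ k ^ 2 - γ i ^ 2
            = C ^ 2 * (((k:ℝ) ^ (-(2*α)) - (i:ℝ) ^ (-(2*α))) * (1 + ε k) ^ 2
              + (i:ℝ) ^ (-(2*α)) * ((1 + ε k) ^ 2 - (1 + ε i) ^ 2)) by
              rw [hγk2, hγi2]; ring, abs_mul, abs_of_nonneg (sq_nonneg C)]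
      _ ≤ C ^ 2 * (|((k:ℝ) ^ (-(2*α)) - (i:ℝ) ^ (-(2*α))) * (1 + ε k) ^ 2|
            + |(i:ℝ) ^ (-(2*α)) * ((1 + ε k) ^ 2 - (1 + ε i) ^ 2)|) :=
          mul_le_mul_of_nonneg_left (abs_add_le _ _) (sq_nonneg C)
      _ = C ^ 2 * (|(k:ℝ) ^ (-(2*α)) - (i:ℝ) ^ (-(2*α))| * (1 + ε k) ^ 2
            + (i:ℝ) ^ (-(2*α)) * |(1 + ε k) ^ 2 - (1 + ε i) ^ 2|) := by
          rw [abs_mul, abs_mul, abs_of_nonneg hu0, abs_of_nonneg hA'0]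
      _ ≤ C ^ 2 * ((16 * (d:ℝ) * ((i:ℝ) ^ (-(2*α) - 1))) * 4
            + (i:ℝ) ^ (-(2*α)) * (6 * (K / i))) := by
          have m1 : |(k:ℝ) ^ (-(2*α)) - (i:ℝ) ^ (-(2*α))| * (1 + ε k) ^ 2
              ≤ (16 * (d:ℝ) * ((i:ℝ) ^ (-(2*α) - 1))) * 4 :=
            mul_le_mul hA1 hu4 hu0 (by positivity)
          have m2 : (i:ℝ) ^ (-(2*α)) * |(1 + ε k) ^ 2 - (1 + ε i) ^ 2|
              ≤ (i:ℝ) ^ (-(2*α)) * (6 * (K / i)) :=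
            mul_le_mul_of_nonneg_left huu hA'0
          nlinarith [m1, m2, sq_nonneg C]
      _ = C ^ 2 * (64 * (d:ℝ) * ((i:ℝ) ^ (-(2*α) - 1)))
            + 6 * C ^ 2 * ((i:ℝ) ^ (-(2*α)) * (K / i)) := by ring
      _ = C ^ 2 * (64 * (d:ℝ) * ((i:ℝ) ^ (-(2*α) - 1)))
            + 6 * C ^ 2 * (K * ((i:ℝ) ^ (-(2*α) - 1))) := by rw [hAx]
      _ = B * (i:ℝ) ^ (-(2*α) - 1) := by rw [hBdef]; ring
  have hlow : ∀ i : ℕ, N₁ ≤ i → C^3/8 * (i:ℝ) ^ (-(3*α)) ≤ γ i ^ 3 := by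
    intro i hi
    obtain ⟨h1, h2, h3, h4⟩ := hbase i hi
    have hip : (0:ℝ) < i := by linarith
    have hεi := abs_le.1
      ((hεb i hi i (Finset.mem_Icc.mpr ⟨by omega, by omega⟩)).trans (hKhalf i hi))
    have h0 : (0:ℝ) ≤ (i:ℝ) ^ (-α) := Real.rpow_nonneg hip.le _
    have hlb : C/2 * (i:ℝ) ^ (-α) ≤ γ i := by
      rw [hγ i (by omega)]
      nlinarith [hεi.1, mul_nonneg hC.le h0]
    have hlb0 : (0:ℝ) ≤ C/2 * (i:ℝ) ^ (-α) := by positivity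
    have hcube := pow_le_pow_left₀ hlb0 hlb 3
    have hx3 : ((i:ℝ) ^ (-α)) ^ 3 = (i:ℝ) ^ (-(3*α)) := by
      rw [rpow_cube_eq (i:ℝ) (-α) hip.le, show (3:ℝ) * -α = -(3*α) by ring]
    calc C^3/8 * (i:ℝ) ^ (-(3*α)) = (C/2 * (i:ℝ) ^ (-α)) ^ 3 := by rw [← hx3]; ring
      _ ≤ γ i ^ 3 := hcube
  have htend : Tendsto (fun n : ℕ => B * (n:ℝ) ^ (α - 1)) atTop (nhds 0) := by
    have h1 : Tendsto (fun x : ℝ => x ^ (-(1 - α))) atTop (nhds 0) :=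
      tendsto_rpow_neg_atTop (by linarith)
    have h2 : Tendsto (fun n : ℕ => ((n:ℝ)) ^ (-(1 - α))) atTop (nhds 0) :=
      h1.comp tendsto_natCast_atTop_atTop
    have h3 : (fun n : ℕ => B * (n:ℝ) ^ (α - 1))
        = fun n : ℕ => B * ((n:ℝ)) ^ (-(1 - α)) := by
      funext n; rw [show α - 1 = -(1 - α) by ring]
    rw [h3]
    simpa using h2.const_mul B
  have hev : ∀ᶠ n : ℕ in atTop, B * (n:ℝ) ^ (α - 1) < C^3/(16*(d:ℝ)) := by
    have hpos' : (0:ℝ) < C^3/(16*(d:ℝ)) := by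
      have : (0:ℝ) < (d:ℝ) := by exact_mod_cast hd
      positivity
    exact htend.eventually_lt_const hpos'
  obtain ⟨N₃, hN₃⟩ := eventually_atTop.1 hev
  have part2 : ∀ i : ℕ, max N₁ N₃ ≤ i →
      (d : ℝ) * ((Finset.Icc (i - d) (i + d)).sup'
          (Finset.nonempty_Icc.mpr (by omega))
          fun k => |γ k ^ 2 - γ i ^ 2|)
        ≤ (1 / 2) * γ i ^ 3 := by
    intro i hi
    have hi1 : N₁ ≤ i := le_trans (le_max_left _ _) hi
    have hi3 : N₃ ≤ i := le_trans (le_max_right _ _) hi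
    obtain ⟨h1, h2, h3, h4⟩ := hbase i hi1
    have hip : (0:ℝ) < i := by linarith
    have hXX0 : (0:ℝ) ≤ (i:ℝ) ^ (-(3*α)) := Real.rpow_nonneg hip.le _
    have hsplit : B * (i:ℝ) ^ (-(2*α) - 1) = (B * (i:ℝ) ^ (α - 1)) * (i:ℝ) ^ (-(3*α)) := by
      have hmul : (i:ℝ) ^ (α - 1) * (i:ℝ) ^ (-(3*α)) = (i:ℝ) ^ (-(2*α) - 1) := by
        rw [← Real.rpow_add hip, show (α - 1) + -(3*α) = -(2*α) - 1 by ring]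
      conv_rhs => rw [mul_assoc, hmul]
    have hchain : B * (i:ℝ) ^ (-(2*α) - 1) ≤ (1/(2*(d:ℝ))) * γ i ^ 3 := by
      calc B * (i:ℝ) ^ (-(2*α) - 1) = (B * (i:ℝ) ^ (α - 1)) * (i:ℝ) ^ (-(3*α)) := hsplit
        _ ≤ (C^3/(16*(d:ℝ))) * (i:ℝ) ^ (-(3*α)) :=
            mul_le_mul_of_nonneg_right (hN₃ i hi3).le hXX0
        _ = (1/(2*(d:ℝ))) * (C^3/8 * (i:ℝ) ^ (-(3*α))) := by ring
        _ ≤ (1/(2*(d:ℝ))) * γ i ^ 3 := by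
            have hd0 : (0:ℝ) < (d:ℝ) := by exact_mod_cast hd
            exact mul_le_mul_of_nonneg_left (hlow i hi1) (by positivity)
    have hsup : ((Finset.Icc (i - d) (i + d)).sup'
        (Finset.nonempty_Icc.mpr (by omega))
        fun k => |γ k ^ 2 - γ i ^ 2|) ≤ (1/(2*(d:ℝ))) * γ i ^ 3 := by
      apply Finset.sup'_le
      intro k hk
      exact (hest i hi1 k hk).trans hchain
    have hd0 : (0:ℝ) < (d:ℝ) := by exact_mod_cast hd
    calc (d : ℝ) * ((Finset.Icc (i - d) (i + d)).sup'
          (Finset.nonempty_Icc.mpr (by omega))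
          fun k => |γ k ^ 2 - γ i ^ 2|)
        ≤ (d:ℝ) * ((1/(2*(d:ℝ))) * γ i ^ 3) := mul_le_mul_of_nonneg_left hsup hd0.le
      _ = (1 / 2) * γ i ^ 3 := by field_simp
  exact ⟨part1, ⟨max N₁ N₃, part2⟩,
    fun M hirr hub _ hdrift =>
      M.transient_of_criterion d hd γ part1 (max N₁ N₃) N₀ part2 hpos hirr hub hdrift⟩
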